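/- Let X and Y be nonnegative absolutely continuous random variables with finite means and strictly increasing distribution functions F and G, and let h be a concave, strictly increasing, differentiable distortion function. If X ≤_dmrl Y, then X_h ≤_dmrl Y_h. -/

import Mathlib

open MeasureTheory Set Filter

/-- The (generalized inverse) quantile function of a distribution function `F`. -/
noncomputable def quantile (F : ℝ → ℝ) (p : ℝ) : ℝ := sInf {x : ℝ | p ≤ F x}

/-- `F` is the distribution function of a nonnegative random variable
(with total mass one). -/
def IsNonnegCDF (F : ℝ → ℝ) : Prop :=
  Monotone F ∧ (∀ x : ℝ, x ≤ 0 → F x = 0) ∧ Tendsto F atTop (nhds 1)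

/-- A distortion function: a left-continuous increasing map of `[0,1]` onto itself
with `h 0 = 0` and `h 1 = 1`. -/
def IsDistortionFn (h : ℝ → ℝ) : Prop :=
  MonotoneOn h (Icc 0 1) ∧ (∀ p ∈ Ioc (0:ℝ) 1, ContinuousWithinAt h (Iio p) p) ∧
    h 0 = 0 ∧ h 1 = 1 ∧ MapsTo h (Icc 0 1) (Icc 0 1)

/-- `h` is starshaped: `h p / p` is increasing on `(0,1]`. -/
def Starshaped (h : ℝ → ℝ) : Prop := MonotoneOn (fun p => h p / p) (Ioc 0 1)

/-- `h` is antistarshaped: `h p / p` is decreasing on `(0,1]`. -/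
def Antistarshaped (h : ℝ → ℝ) : Prop := AntitoneOn (fun p => h p / p) (Ioc 0 1)

/-- Distribution function of the distorted random variable `X_h`,
whose survival function is `h ∘ (1 - F)`. -/
noncomputable def distortedCDF (h F : ℝ → ℝ) : ℝ → ℝ := fun x => 1 - h (1 - F x)

/-- `∫_0^{F⁻¹(p)} (1 - F(x)) dx`. -/
noncomputable def tttIntegral (F : ℝ → ℝ) (p : ℝ) : ℝ :=
  ∫ x in (0:ℝ)..(quantile F p), (1 - F x)

/-- `∫_{F⁻¹(p)}^∞ (1 - F(x)) dx`. -/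
noncomputable def ewIntegral (F : ℝ → ℝ) (p : ℝ) : ℝ :=
  ∫ x in Ioi (quantile F p), (1 - F x)

/-- `∫_0^{F⁻¹(p)} F(x) dx`. -/
noncomputable def mitIntegral (F : ℝ → ℝ) (p : ℝ) : ℝ :=
  ∫ x in (0:ℝ)..(quantile F p), F x

/-- Total time on test transform order. -/
def TTT_le (F G : ℝ → ℝ) : Prop := ∀ p ∈ Ioo (0:ℝ) 1, tttIntegral F p ≤ tttIntegral G p

/-- Excess wealth order. -/
def EW_le (F G : ℝ → ℝ) : Prop := ∀ p ∈ Ioo (0:ℝ) 1, ewIntegral F p ≤ ewIntegral G p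

/-- Decreasing mean residual life order. -/
def DMRL_le (F G : ℝ → ℝ) : Prop :=
  MonotoneOn (fun p => ewIntegral G p / ewIntegral F p) (Ioo (0:ℝ) 1)

/-- Quantile mean inactivity time order. -/
def QMIT_le (F G : ℝ → ℝ) : Prop :=
  AntitoneOn (fun p => mitIntegral F p / mitIntegral G p) (Ioo (0:ℝ) 1)


section AuxDMRL

variable {F h : ℝ → ℝ}

private lemma aux_F_le_one (hmono : Monotone F) (htend : Tendsto F atTop (nhds 1)) (x : ℝ) :
    F x ≤ 1 := hmono.ge_of_tendsto htend x

private lemma aux_F_nonneg (hmono : Monotone F) (hzero : ∀ x ≤ 0, F x = 0) (x : ℝ) :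
    0 ≤ F x := by
  have h1 : F (min x 0 - 1) = 0 := hzero _ (by linarith [min_le_right x 0])
  have := hmono (show min x 0 - 1 ≤ x by linarith [min_le_left x 0])
  linarith

private lemma aux_F_lt_one (hmono : Monotone F) (hzero : ∀ x ≤ 0, F x = 0)
    (htend : Tendsto F atTop (nhds 1)) (hstrict : StrictMonoOn F (Ici 0)) (x : ℝ) :
    F x < 1 := by
  rcases lt_or_ge (F x) 1 with hlt | hge
  · exact hlt
  have hx1 : F x = 1 := le_antisymm (aux_F_le_one hmono htend x) hge
  have hx0 : 0 < x := by
    by_contra hx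
    push_neg at hx
    rw [hzero x hx] at hx1; norm_num at hx1
  have h2 := hstrict (le_of_lt hx0) (show x + 1 ∈ Ici (0:ℝ) by simp; linarith) (by linarith)
  have := aux_F_le_one hmono htend (x + 1)
  linarith

private lemma aux_quantile_spec (hmono : Monotone F) (hzero : ∀ x ≤ 0, F x = 0)
    (htend : Tendsto F atTop (nhds 1)) (hcont : Continuous F) {u : ℝ}
    (hu0 : 0 < u) (hu1 : u < 1) :
    F (quantile F u) = u ∧ 0 < quantile F u ∧ ∀ x : ℝ, u ≤ F x ↔ quantile F u ≤ x := by
  set s : Set ℝ := {x : ℝ | u ≤ F x} with hs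
  have hne : s.Nonempty := by
    obtain ⟨y, hy⟩ := (htend.eventually (eventually_gt_nhds hu1)).exists
    exact ⟨y, le_of_lt hy⟩
  have hbdd : BddBelow s := by
    refine ⟨0, fun y hy => ?_⟩
    by_contra hy0
    push_neg at hy0
    have := hzero y (le_of_lt hy0)
    simp only [hs, mem_setOf_eq] at hy
    linarith
  have hclosed : IsClosed s := by
    have : s = F ⁻¹' Ici u := rfl
    rw [this]
    exact isClosed_Ici.preimage hcont
  have hmem : quantile F u ∈ s := hclosed.csInf_mem hne hbdd
  have hQ0 : 0 < quantile F u := by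
    by_contra hQ
    push_neg at hQ
    have := hzero _ hQ
    simp only [hs, mem_setOf_eq] at hmem
    linarith
  have hFQ : F (quantile F u) = u := by
    refine le_antisymm ?_ hmem
    by_contra hgt
    push_neg at hgt
    have hev : ∀ᶠ y in nhds (quantile F u), u < F y :=
      hcont.continuousAt.eventually (eventually_gt_nhds hgt)
    have hev' : ∀ᶠ y in nhdsWithin (quantile F u) (Iio (quantile F u)), u < F y :=
      hev.filter_mono nhdsWithin_le_nhds
    have hev'' : ∀ᶠ y in nhdsWithin (quantile F u) (Iio (quantile F u)), y < quantile F u :=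
      eventually_mem_nhdsWithin
    obtain ⟨y, hy1, hy2⟩ := (hev'.and hev'').exists
    exact absurd (csInf_le hbdd (le_of_lt hy1 : y ∈ s)) (not_le.mpr hy2)
  refine ⟨hFQ, hQ0, fun x => ⟨fun hx => csInf_le hbdd hx, fun hx => ?_⟩⟩
  calc u = F (quantile F u) := hFQ.symm
    _ ≤ F x := hmono hx

end AuxDMRL

section AuxDMRL2

variable {h : ℝ → ℝ}

private lemma aux_h_ge_id (hconc : ConcaveOn ℝ (Icc 0 1) h)
    (h0 : h 0 = 0) (h1 : h 1 = 1) {t : ℝ} (ht0 : 0 ≤ t) (ht1 : t ≤ 1) : t ≤ h t := by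
  have := hconc.2 (show (1:ℝ) ∈ Icc (0:ℝ) 1 by simp) (show (0:ℝ) ∈ Icc (0:ℝ) 1 by simp)
    (le_of_lt (by linarith : (0:ℝ) < t + (1 - t)) |> fun _ => ht0) (by linarith : (0:ℝ) ≤ 1 - t)
    (by ring : t + (1 - t) = 1)
  simp only [smul_eq_mul, mul_one, mul_zero, add_zero, h0, h1] at this
  linarith

private lemma aux_k_anti (hconc : ConcaveOn ℝ (Icc 0 1) h) (h0 : h 0 = 0)
    {t s : ℝ} (ht : 0 < t) (hts : t ≤ s) (hs : s ≤ 1) : h s * t ≤ h t * s := by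
  have hs0 : 0 < s := lt_of_lt_of_le ht hts
  have := hconc.2 (show s ∈ Icc (0:ℝ) 1 by constructor <;> linarith)
    (show (0:ℝ) ∈ Icc (0:ℝ) 1 by simp)
    (show (0:ℝ) ≤ t / s by positivity)
    (show (0:ℝ) ≤ 1 - t / s by rw [sub_nonneg]; exact div_le_one_of_le₀ hts (le_of_lt hs0))
    (by ring)
  simp only [smul_eq_mul, mul_zero, add_zero, h0] at this
  have hst : t / s * s = t := div_mul_cancel₀ t (ne_of_gt hs0)
  rw [hst] at this
  have := mul_le_mul_of_nonneg_right this (le_of_lt hs0)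
  calc h s * t = t / s * h s * s := by field_simp
    _ ≤ h t * s := this

/-- The deriv of h at an interior point is nonneg and bounded by a left slope. -/
private lemma aux_deriv_h_bounds (hmono : MonotoneOn h (Icc 0 1))
    (hconc : ConcaveOn ℝ (Icc 0 1) h)
    (hdiff : ∀ p ∈ Ioo (0:ℝ) 1, DifferentiableAt ℝ h p)
    {t d : ℝ} (ht : t ∈ Ioo (0:ℝ) 1) (hd : 0 < d) (hdt : d ≤ t) :
    0 ≤ deriv h t ∧ deriv h t ≤ (h t - h (t - d)) / d := by
  have hda : HasDerivAt h (deriv h t) t := (hdiff t ht).hasDerivAt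
  have hslope : Tendsto (slope h t) (nhdsWithin t (Ioi t)) (nhds (deriv h t)) :=
    (hasDerivAt_iff_tendsto_slope.mp hda).mono_left
      (nhdsWithin_mono t (fun y hy => ne_of_gt hy))
  have hev : ∀ᶠ y in nhdsWithin t (Ioi t), y ∈ Ioo t 1 := by
    have h1 : ∀ᶠ y in nhdsWithin t (Ioi t), y < 1 :=
      eventually_nhdsWithin_of_eventually_nhds (eventually_lt_nhds ht.2)
    have h2 : ∀ᶠ y in nhdsWithin t (Ioi t), t < y := eventually_mem_nhdsWithin
    filter_upwards [h1, h2] with y hy1 hy2 using ⟨hy2, hy1⟩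
  constructor
  · refine ge_of_tendsto hslope ?_
    filter_upwards [hev] with y hy
    have hh := hmono (show t ∈ Icc (0:ℝ) 1 by exact ⟨le_of_lt ht.1, le_of_lt ht.2⟩)
      (show y ∈ Icc (0:ℝ) 1 by exact ⟨by linarith [ht.1, hy.1], le_of_lt hy.2⟩) (le_of_lt hy.1)
    rw [slope_def_field]
    exact div_nonneg (by linarith) (by linarith [hy.1])
  · refine le_of_tendsto hslope ?_
    filter_upwards [hev] with y hy
    rw [slope_def_field]
    have key := hconc.slope_anti_adjacent
      (show t - d ∈ Icc (0:ℝ) 1 by constructor <;> [linarith; linarith [ht.2]])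
      (show y ∈ Icc (0:ℝ) 1 by exact ⟨by linarith [ht.1, hy.1], le_of_lt hy.2⟩)
      (show t - d < t by linarith) hy.1
    have heq : t - (t - d) = d := by ring
    rw [heq] at key
    exact key

end AuxDMRL2

private noncomputable def auxK (h : ℝ → ℝ) : ℝ → ℝ := fun u => h (1 - u) * (1 - u)⁻¹

section AuxDMRL3
variable {h : ℝ → ℝ}

private lemma auxK_nonneg (hmaps : MapsTo h (Icc 0 1) (Icc 0 1))
    {u : ℝ} (hu0 : 0 ≤ u) (hu1 : u < 1) : 0 ≤ auxK h u := by
  have h1 : (0:ℝ) ≤ h (1 - u) :=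
    (hmaps (show 1 - u ∈ Icc (0:ℝ) 1 by constructor <;> linarith)).1
  have h2 : (0:ℝ) < 1 - u := by linarith
  exact mul_nonneg h1 (le_of_lt (inv_pos.2 h2))

private lemma auxK_mono (hconc : ConcaveOn ℝ (Icc 0 1) h) (h0 : h 0 = 0)
    {u v : ℝ} (hu0 : 0 ≤ u) (huv : u ≤ v) (hv1 : v < 1) : auxK h u ≤ auxK h v := by
  have key : h (1 - u) * (1 - v) ≤ h (1 - v) * (1 - u) :=
    aux_k_anti hconc h0 (t := 1 - v) (s := 1 - u) (by linarith) (by linarith) (by linarith)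
  show h (1 - u) * (1 - u)⁻¹ ≤ h (1 - v) * (1 - v)⁻¹
  rw [← div_eq_mul_inv, ← div_eq_mul_inv, div_le_div_iff₀ (by linarith) (by linarith)]
  exact key

private lemma auxK_hasDerivAt (hdiff : ∀ p ∈ Ioo (0:ℝ) 1, DifferentiableAt ℝ h p)
    {u : ℝ} (hu : u ∈ Ioo (0:ℝ) 1) :
    HasDerivAt (auxK h) (deriv h (1 - u) * -1 * (1 - u)⁻¹ +
      h (1 - u) * (-(-1) / (1 - u) ^ 2)) u := by
  have hne : (1 : ℝ) - u ≠ 0 := by cases hu; intro hc; linarith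
  have hinner : HasDerivAt (fun x : ℝ => 1 - x) (-1) u := by
    simpa using (hasDerivAt_id u).const_sub 1
  have h1 : HasDerivAt (fun x : ℝ => h (1 - x)) (deriv h (1 - u) * -1) u := by
    have hd : HasDerivAt h (deriv h (1 - u)) (1 - u) :=
      (hdiff (1 - u) (by cases hu; constructor <;> linarith)).hasDerivAt
    exact HasDerivAt.comp u hd hinner
  have h2 : HasDerivAt (fun x : ℝ => (1 - x)⁻¹) (-(-1) / (1 - u) ^ 2) u :=
    hinner.inv hne
  exact h1.mul h2

private lemma auxK_deriv_nonneg (hmono : MonotoneOn h (Icc 0 1)) (h0 : h 0 = 0)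
    (hconc : ConcaveOn ℝ (Icc 0 1) h)
    (hdiff : ∀ p ∈ Ioo (0:ℝ) 1, DifferentiableAt ℝ h p)
    {u : ℝ} (hu : u ∈ Ioo (0:ℝ) 1) : 0 ≤ deriv (auxK h) u := by
  obtain ⟨hu0, hu1⟩ := hu
  set s : ℝ := 1 - u with hs
  have hs0 : 0 < s := by linarith
  have hs1 : s < 1 := by linarith
  have hderiv := (auxK_hasDerivAt hdiff ⟨hu0, hu1⟩).deriv
  rw [hderiv]
  have hbd := aux_deriv_h_bounds hmono hconc hdiff (t := s) (d := s)
    ⟨hs0, hs1⟩ hs0 le_rfl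
  have h1 : deriv h s ≤ (h s - h 0) / s := by simpa using hbd.2
  rw [h0, sub_zero] at h1
  have h2 : deriv h s * s ≤ h s := by
    have := mul_le_mul_of_nonneg_right h1 (le_of_lt hs0)
    rwa [div_mul_cancel₀ _ (ne_of_gt hs0)] at this
  have hs2 : (0:ℝ) < s ^ 2 := pow_pos hs0 2
  rw [show deriv h (1 - u) * -1 * (1 - u)⁻¹ + h (1 - u) * (-(-1) / (1 - u) ^ 2)
      = (h s - deriv h s * s) / s ^ 2 by rw [← hs]; field_simp; ring]
  exact div_nonneg (by linarith) (le_of_lt hs2)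

private lemma auxK_deriv_bound (hmono : MonotoneOn h (Icc 0 1))
    (hmaps : MapsTo h (Icc 0 1) (Icc 0 1)) (h0 : h 0 = 0)
    (hconc : ConcaveOn ℝ (Icc 0 1) h)
    (hdiff : ∀ p ∈ Ioo (0:ℝ) 1, DifferentiableAt ℝ h p)
    {a b u : ℝ} (ha : 0 < a) (hb : b < 1) (hu : u ∈ Icc a b) :
    |deriv (auxK h) u| ≤ ((1 - b) ^ 2)⁻¹ := by
  obtain ⟨hua, hub⟩ := hu
  have hu0 : 0 < u := lt_of_lt_of_le ha hua
  have hu1 : u < 1 := lt_of_le_of_lt hub hb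
  have hnn := auxK_deriv_nonneg hmono h0 hconc hdiff ⟨hu0, hu1⟩
  rw [abs_of_nonneg hnn]
  have hderiv := (auxK_hasDerivAt hdiff ⟨hu0, hu1⟩).deriv
  rw [hderiv]
  set s : ℝ := 1 - u with hs
  have hs0 : 0 < s := by linarith
  have hdh : 0 ≤ deriv h s :=
    (aux_deriv_h_bounds hmono hconc hdiff (t := s) (d := s)
      ⟨hs0, by linarith⟩ hs0 le_rfl).1
  have hh1 : h s ≤ 1 := (hmaps (show s ∈ Icc (0:ℝ) 1 by constructor <;> linarith)).2
  have key : deriv h (1 - u) * -1 * (1 - u)⁻¹ + h (1 - u) * (-(-1) / (1 - u) ^ 2)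
      ≤ (s ^ 2)⁻¹ := by
    rw [← hs]
    have e1 : deriv h s * -1 * s⁻¹ ≤ 0 := by
      have : 0 ≤ deriv h s * s⁻¹ := by positivity
      linarith
    have e2 : h s * (-(-1) / s ^ 2) ≤ (s ^ 2)⁻¹ := by
      rw [show -(-1 : ℝ) = 1 by ring]
      rw [div_eq_mul_inv, one_mul]
      have : (0:ℝ) < (s ^ 2)⁻¹ := inv_pos.2 (pow_pos hs0 2)
      nlinarith
    linarith
  refine le_trans key ?_
  have h1 : 1 - b ≤ s := by rw [hs]; linarith
  have hb2 : (0:ℝ) < (1 - b) ^ 2 := pow_pos (by linarith) 2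
  have : (1 - b) ^ 2 ≤ s ^ 2 := by nlinarith
  exact inv_anti₀ hb2 this

private lemma auxK_deriv_integrableOn (hmono : MonotoneOn h (Icc 0 1))
    (hmaps : MapsTo h (Icc 0 1) (Icc 0 1)) (h0 : h 0 = 0)
    (hconc : ConcaveOn ℝ (Icc 0 1) h)
    (hdiff : ∀ p ∈ Ioo (0:ℝ) 1, DifferentiableAt ℝ h p)
    {a b : ℝ} (ha : 0 < a) (hb : b < 1) :
    IntegrableOn (deriv (auxK h)) (Icc a b) volume := by
  refine Integrable.mono' (g := fun _ => ((1 - b) ^ 2)⁻¹) ?_ ?_ ?_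
  · exact integrableOn_const measure_Icc_lt_top.ne
  · exact (measurable_deriv (auxK h)).aestronglyMeasurable
  · refine (ae_restrict_iff' measurableSet_Icc).2 (ae_of_all _ fun u hu => ?_)
    exact auxK_deriv_bound hmono hmaps h0 hconc hdiff ha hb hu

private lemma auxK_FTC (hmono : MonotoneOn h (Icc 0 1))
    (hmaps : MapsTo h (Icc 0 1) (Icc 0 1)) (h0 : h 0 = 0)
    (hconc : ConcaveOn ℝ (Icc 0 1) h)
    (hdiff : ∀ p ∈ Ioo (0:ℝ) 1, DifferentiableAt ℝ h p)
    {a v : ℝ} (ha : 0 < a) (hav : a ≤ v) (hv : v < 1) :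
    (∫ u in Ioc a v, deriv (auxK h) u) = auxK h v - auxK h a := by
  have hint : IntervalIntegrable (deriv (auxK h)) volume a v := by
    have H := auxK_deriv_integrableOn hmono hmaps h0 hconc hdiff (a := a) (b := v) ha hv
    exact (by rwa [uIcc_of_le hav] : IntegrableOn (deriv (auxK h)) (uIcc a v) volume).intervalIntegrable
  have := intervalIntegral.integral_eq_sub_of_hasDerivAt (f := auxK h)
    (f' := deriv (auxK h)) (a := a) (b := v) ?_ hint
  · rw [← intervalIntegral.integral_of_le hav, this]
  · intro x hx
    rw [uIcc_of_le hav] at hx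
    have hx0 : 0 < x := lt_of_lt_of_le ha hx.1
    have hx1 : x < 1 := lt_of_le_of_lt hx.2 hv
    exact ((auxK_hasDerivAt hdiff ⟨hx0, hx1⟩).differentiableAt).hasDerivAt

end AuxDMRL3

section AuxDMRL4
variable {F h : ℝ → ℝ}

private lemma aux_split (f : ℝ → ℝ) {A B : ℝ} (hAB : A ≤ B)
    (hint : IntegrableOn f (Ioi A) volume) :
    ∫ x in Ioi A, f x = (∫ x in Ioc A B, f x) + ∫ x in Ioi B, f x := by
  rw [← Ioc_union_Ioi_eq_Ioi hAB]
  exact setIntegral_union (Ioc_disjoint_Ioi le_rfl) measurableSet_Ioi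
    (hint.mono_set Ioc_subset_Ioi_self) (hint.mono_set (Ioi_subset_Ioi hAB))

private lemma aux_hS_measurable (hmonoF : Monotone F) (hzero : ∀ x ≤ 0, F x = 0)
    (htend : Tendsto F atTop (nhds 1)) (hcont : Continuous F)
    (hmonoh : MonotoneOn h (Icc 0 1)) :
    Measurable fun x => h (1 - F x) := by
  have hcl : Monotone fun t : ℝ => h (max 0 (min 1 t)) := by
    intro t s hts
    exact hmonoh ⟨le_max_left _ _, max_le zero_le_one (min_le_left _ _)⟩
      ⟨le_max_left _ _, max_le zero_le_one (min_le_left _ _)⟩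
      (max_le_max le_rfl (min_le_min le_rfl hts))
  have heq : (fun x => h (1 - F x)) = fun x => h (max 0 (min 1 (1 - F x))) := by
    funext x
    have h1 : 0 ≤ F x := aux_F_nonneg hmonoF hzero x
    have h2 : F x ≤ 1 := aux_F_le_one hmonoF htend x
    rw [min_eq_right (by linarith), max_eq_right (by linarith)]
  rw [heq]
  exact hcl.measurable.comp (continuous_const.sub hcont).measurable

private lemma aux_rep
    (hmonoF : Monotone F) (hzero : ∀ x ≤ 0, F x = 0) (htend : Tendsto F atTop (nhds 1))
    (hstrict : StrictMonoOn F (Ici 0)) (hcont : Continuous F)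
    (hFint : IntegrableOn (fun x => 1 - F x) (Ioi 0) volume)
    (hmonoh : MonotoneOn h (Icc 0 1)) (hmaps : MapsTo h (Icc 0 1) (Icc 0 1))
    (h0 : h 0 = 0) (hconc : ConcaveOn ℝ (Icc 0 1) h)
    (hdiff : ∀ p ∈ Ioo (0:ℝ) 1, DifferentiableAt ℝ h p)
    {a b : ℝ} (ha : 0 < a) (hab : a ≤ b) (hb : b < 1) :
    ∫ x in Ioc (quantile F a) (quantile F b), h (1 - F x)
      = auxK h a * ((∫ x in Ioi (quantile F a), (1 - F x))
          - ∫ x in Ioi (quantile F b), (1 - F x))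
        + ∫ u in Ioc a b, deriv (auxK h) u *
            ((∫ x in Ioi (quantile F u), (1 - F x))
              - ∫ x in Ioi (quantile F b), (1 - F x)) := by
  obtain ⟨hFA, hA0, hAiff⟩ :=
    aux_quantile_spec hmonoF hzero htend hcont ha (lt_of_le_of_lt hab hb)
  obtain ⟨hFB, hB0, hBiff⟩ :=
    aux_quantile_spec hmonoF hzero htend hcont (lt_of_lt_of_le ha hab) hb
  set A := quantile F a with hAdef
  set B := quantile F b with hBdef
  have hAB : A ≤ B := (hAiff B).mp (by rw [hFB]; exact hab)
  have hFxmem : ∀ x ∈ Ioc A B, a < F x ∧ F x ≤ b := by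
    intro x hx
    constructor
    · rw [← hFA]
      exact hstrict (le_of_lt hA0) (le_trans (le_of_lt hA0) (le_of_lt hx.1)) hx.1
    · rw [← hFB]; exact hmonoF hx.2
  have hFnn : ∀ x : ℝ, 0 ≤ F x := aux_F_nonneg hmonoF hzero
  have hFlt1 : ∀ x : ℝ, F x < 1 := aux_F_lt_one hmonoF hzero htend hstrict
  -- pointwise identity
  have hpt : ∀ x ∈ Ioc A B, h (1 - F x)
      = (1 - F x) * auxK h a + (1 - F x) * (auxK h (F x) - auxK h a) := by
    intro x hx
    have h1 : h (1 - F x) = (1 - F x) * auxK h (F x) := by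
      have hne : (1 : ℝ) - F x ≠ 0 := by have := hFlt1 x; intro hc; linarith
      show h (1 - F x) = (1 - F x) * (h (1 - F x) * (1 - F x)⁻¹)
      field_simp
    rw [h1]; ring
  -- integrabilities
  have hsub0 : Ioc A B ⊆ Ioi (0:ℝ) := fun x hx => lt_trans hA0 hx.1
  have hint1 : IntegrableOn (fun x => 1 - F x) (Ioc A B) volume := hFint.mono_set hsub0
  have hKF : Monotone fun x => auxK h (F x) := by
    intro x y hxy
    exact auxK_mono hconc h0 (hFnn x) (hmonoF hxy) (hFlt1 y)
  have hint2 : IntegrableOn (fun x => (1 - F x) * (auxK h (F x) - auxK h a))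
      (Ioc A B) volume := by
    refine Integrable.mono' (g := fun _ => auxK h b - auxK h a) ?_ ?_ ?_
    · exact integrableOn_const measure_Ioc_lt_top.ne
    · exact (((continuous_const.sub hcont).measurable).mul
        (hKF.measurable.sub measurable_const)).aestronglyMeasurable
    · refine (ae_restrict_iff' measurableSet_Ioc).2 (ae_of_all _ fun x hx => ?_)
      obtain ⟨hax, hxb⟩ := hFxmem x hx
      have hKa : auxK h a ≤ auxK h (F x) :=
        auxK_mono hconc h0 (le_of_lt ha) (le_of_lt hax) (hFlt1 x)
      have hKb : auxK h (F x) ≤ auxK h b := auxK_mono hconc h0 (hFnn x) hxb hb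
      have hb1 : 0 ≤ 1 - F x := by linarith [hFlt1 x]
      have hb2 : 1 - F x ≤ 1 := by linarith [hFnn x]
      rw [Real.norm_eq_abs, abs_of_nonneg (mul_nonneg hb1 (by linarith))]
      have key : (1 - F x) * (auxK h (F x) - auxK h a) ≤ auxK h b - auxK h a := by
        have h1 : (1 - F x) * (auxK h (F x) - auxK h a) ≤ 1 * (auxK h (F x) - auxK h a) :=
          mul_le_mul_of_nonneg_right hb2 (by linarith)
        linarith
      simpa using key
  have e1 : ∫ x in Ioc A B, h (1 - F x)
      = (∫ x in Ioc A B, (1 - F x) * auxK h a)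
        + ∫ x in Ioc A B, (1 - F x) * (auxK h (F x) - auxK h a) := by
    rw [← integral_add (hint1.mul_const _) hint2]
    exact setIntegral_congr_fun measurableSet_Ioc (fun x hx => by rw [hpt x hx])
  have hsplitab : ∫ x in Ioi A, (1 - F x)
      = (∫ x in Ioc A B, (1 - F x)) + ∫ x in Ioi B, (1 - F x) :=
    aux_split _ hAB (hFint.mono_set (Ioi_subset_Ioi (le_of_lt hA0)))
  have e2 : (∫ x in Ioc A B, (1 - F x) * auxK h a)
      = auxK h a * ((∫ x in Ioi A, (1 - F x)) - ∫ x in Ioi B, (1 - F x)) := by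
    rw [integral_mul_const, hsplitab]; ring
  -- Fubini part
  have measσ : MeasurableSet {z : ℝ × ℝ | z.2 ≤ F z.1} := by
    have hc : Continuous fun z : ℝ × ℝ => F z.1 - z.2 :=
      (hcont.comp continuous_fst).sub continuous_snd
    have hset : {z : ℝ × ℝ | z.2 ≤ F z.1} = (fun z : ℝ × ℝ => F z.1 - z.2) ⁻¹' Ici 0 := by
      ext z; simp [sub_nonneg]
    rw [hset]
    exact (isClosed_Ici.preimage hc).measurableSet
  have measΦ : Measurable fun z : ℝ × ℝ => Set.indicator {z : ℝ × ℝ | z.2 ≤ F z.1}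
      (fun z => (1 - F z.1) * deriv (auxK h) z.2) z := by
    exact (((continuous_const.sub (hcont.comp continuous_fst)).measurable).mul
      ((measurable_deriv (auxK h)).comp measurable_snd)).indicator measσ
  have hμν_int : Integrable (Function.uncurry fun x u : ℝ =>
      Set.indicator {z : ℝ × ℝ | z.2 ≤ F z.1}
        (fun z => (1 - F z.1) * deriv (auxK h) z.2) (x, u))
      ((volume.restrict (Ioc A B)).prod (volume.restrict (Ioc a b))) := by
    have huncurry : (Function.uncurry fun x u : ℝ =>
        Set.indicator {z : ℝ × ℝ | z.2 ≤ F z.1}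
          (fun z => (1 - F z.1) * deriv (auxK h) z.2) (x, u))
        = fun z : ℝ × ℝ => Set.indicator {z : ℝ × ℝ | z.2 ≤ F z.1}
          (fun z => (1 - F z.1) * deriv (auxK h) z.2) z := rfl
    rw [huncurry]
    refine Integrable.mono' (g := fun _ => ((1 - b) ^ 2)⁻¹) (integrable_const _)
      measΦ.aestronglyMeasurable ?_
    rw [Measure.prod_restrict]
    refine (ae_restrict_iff' (measurableSet_Ioc.prod measurableSet_Ioc)).2
      (ae_of_all _ fun z hz => ?_)
    obtain ⟨hz1, hz2⟩ := hz
    refine le_trans (norm_indicator_le_norm_self _ _) ?_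
    rw [Real.norm_eq_abs, abs_mul]
    have hb1 : |1 - F z.1| ≤ 1 := by
      rw [abs_le]; constructor
      · linarith [hFlt1 z.1]
      · linarith [hFnn z.1]
    have hb2 : |deriv (auxK h) z.2| ≤ ((1 - b) ^ 2)⁻¹ :=
      auxK_deriv_bound hmonoh hmaps h0 hconc hdiff ha hb (Ioc_subset_Icc_self hz2)
    calc |1 - F z.1| * |deriv (auxK h) z.2| ≤ 1 * ((1 - b) ^ 2)⁻¹ :=
          mul_le_mul hb1 hb2 (abs_nonneg _) zero_le_one
      _ = ((1 - b) ^ 2)⁻¹ := one_mul _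
  have hswap := integral_integral_swap hμν_int
  have stepA : ∀ x ∈ Ioc A B, (∫ u in Ioc a b, Set.indicator {z : ℝ × ℝ | z.2 ≤ F z.1}
      (fun z => (1 - F z.1) * deriv (auxK h) z.2) (x, u))
      = (1 - F x) * (auxK h (F x) - auxK h a) := by
    intro x hx
    obtain ⟨hax, hxb⟩ := hFxmem x hx
    have hind : (fun u => Set.indicator {z : ℝ × ℝ | z.2 ≤ F z.1}
        (fun z => (1 - F z.1) * deriv (auxK h) z.2) (x, u))
        = Set.indicator (Iic (F x)) (fun u => (1 - F x) * deriv (auxK h) u) := by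
      funext u
      by_cases hcase : u ≤ F x
      · rw [Set.indicator_of_mem (show (x, u) ∈ {z : ℝ × ℝ | z.2 ≤ F z.1} from hcase),
          Set.indicator_of_mem (show u ∈ Iic (F x) from hcase)]
      · rw [Set.indicator_of_notMem (show (x, u) ∉ {z : ℝ × ℝ | z.2 ≤ F z.1} from hcase),
          Set.indicator_of_notMem (show u ∉ Iic (F x) from hcase)]
    rw [hind, setIntegral_indicator measurableSet_Iic, Set.Ioc_inter_Iic,
      min_eq_right hxb, integral_const_mul,
      auxK_FTC hmonoh hmaps h0 hconc hdiff ha (le_of_lt hax) (lt_of_le_of_lt hxb hb)]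
  have stepB : ∀ u ∈ Ioc a b, (∫ x in Ioc A B, Set.indicator {z : ℝ × ℝ | z.2 ≤ F z.1}
      (fun z => (1 - F z.1) * deriv (auxK h) z.2) (x, u))
      = deriv (auxK h) u * ((∫ x in Ioi (quantile F u), (1 - F x))
          - ∫ x in Ioi B, (1 - F x)) := by
    intro u hu
    have hu0 : 0 < u := lt_trans ha hu.1
    have hu1 : u < 1 := lt_of_le_of_lt hu.2 hb
    obtain ⟨hFQ, hQ0, hQiff⟩ := aux_quantile_spec hmonoF hzero htend hcont hu0 hu1
    have hQB : quantile F u ≤ B := (hQiff B).mp (by rw [hFB]; exact hu.2)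
    have hAQ : A < quantile F u := by
      by_contra hc; push_neg at hc
      have hm := hmonoF hc
      rw [hFQ, hFA] at hm
      linarith [hu.1]
    have hind : (fun x => Set.indicator {z : ℝ × ℝ | z.2 ≤ F z.1}
        (fun z => (1 - F z.1) * deriv (auxK h) z.2) (x, u))
        = Set.indicator (Ici (quantile F u)) (fun x => (1 - F x) * deriv (auxK h) u) := by
      funext x
      by_cases hcase : u ≤ F x
      · rw [Set.indicator_of_mem (show (x, u) ∈ {z : ℝ × ℝ | z.2 ≤ F z.1} from hcase),
          Set.indicator_of_mem (show x ∈ Ici (quantile F u) from (hQiff x).mp hcase)]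
      · rw [Set.indicator_of_notMem (show (x, u) ∉ {z : ℝ × ℝ | z.2 ≤ F z.1} from hcase),
          Set.indicator_of_notMem (show x ∉ Ici (quantile F u) from
            fun hmem => hcase ((hQiff x).mpr hmem))]
    have hinter : Ioc A B ∩ Ici (quantile F u) = Icc (quantile F u) B := by
      ext x
      simp only [mem_inter_iff, mem_Ioc, mem_Ici, mem_Icc]
      constructor
      · rintro ⟨⟨_, hxB⟩, hQx⟩; exact ⟨hQx, hxB⟩
      · rintro ⟨hQx, hxB⟩; exact ⟨⟨lt_of_lt_of_le hAQ hQx, hxB⟩, hQx⟩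
    have hsplitu : ∫ x in Ioi (quantile F u), (1 - F x)
        = (∫ x in Ioc (quantile F u) B, (1 - F x)) + ∫ x in Ioi B, (1 - F x) :=
      aux_split _ hQB (hFint.mono_set (Ioi_subset_Ioi (le_of_lt hQ0)))
    rw [hind, setIntegral_indicator measurableSet_Ici, hinter,
      integral_Icc_eq_integral_Ioc, integral_mul_const, hsplitu]
    ring
  have e3 : (∫ x in Ioc A B, (1 - F x) * (auxK h (F x) - auxK h a))
      = ∫ u in Ioc a b, deriv (auxK h) u * ((∫ x in Ioi (quantile F u), (1 - F x))
          - ∫ x in Ioi B, (1 - F x)) := by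
    have lhs_eq : (∫ x in Ioc A B, (1 - F x) * (auxK h (F x) - auxK h a))
        = ∫ x in Ioc A B, (∫ u in Ioc a b, Set.indicator {z : ℝ × ℝ | z.2 ≤ F z.1}
            (fun z => (1 - F z.1) * deriv (auxK h) z.2) (x, u)) :=
      (setIntegral_congr_fun measurableSet_Ioc (fun x hx => (stepA x hx).symm))
    rw [lhs_eq, hswap]
    exact setIntegral_congr_fun measurableSet_Ioc stepB
  rw [e1, e2, e3]

end AuxDMRL4

section AuxDMRL5
variable {F h : ℝ → ℝ}

private lemma aux_Snonneg_ae (hmonoF : Monotone F) (hzero : ∀ x ≤ 0, F x = 0)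
    (htend : Tendsto F atTop (nhds 1)) (hstrict : StrictMonoOn F (Ici 0)) (μ : Measure ℝ) :
    0 ≤ᵐ[μ] fun x => 1 - F x :=
  ae_of_all _ fun x => by
    simp only [Pi.zero_apply]
    linarith [aux_F_lt_one hmonoF hzero htend hstrict x]

private lemma aux_quantile_mono (hmonoF : Monotone F) (hzero : ∀ x ≤ 0, F x = 0)
    (htend : Tendsto F atTop (nhds 1)) (hcont : Continuous F)
    {u v : ℝ} (hu : 0 < u) (huv : u ≤ v) (hv : v < 1) :
    quantile F u ≤ quantile F v := by
  obtain ⟨hFv, _, _⟩ := aux_quantile_spec hmonoF hzero htend hcont (lt_of_lt_of_le hu huv) hv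
  obtain ⟨_, _, huiff⟩ := aux_quantile_spec hmonoF hzero htend hcont hu (lt_of_le_of_lt huv hv)
  exact (huiff _).mp (by rw [hFv]; exact huv)

private lemma aux_V_antitone (hmonoF : Monotone F) (hzero : ∀ x ≤ 0, F x = 0)
    (htend : Tendsto F atTop (nhds 1)) (hstrict : StrictMonoOn F (Ici 0)) (hcont : Continuous F)
    (hFint : IntegrableOn (fun x => 1 - F x) (Ioi 0) volume)
    {u v : ℝ} (hu : 0 < u) (huv : u ≤ v) (hv : v < 1) :
    (∫ x in Ioi (quantile F v), (1 - F x)) ≤ ∫ x in Ioi (quantile F u), (1 - F x) := by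
  obtain ⟨_, hu0, _⟩ := aux_quantile_spec hmonoF hzero htend hcont hu (lt_of_le_of_lt huv hv)
  refine setIntegral_mono_set (hFint.mono_set (Ioi_subset_Ioi (le_of_lt hu0)))
    (aux_Snonneg_ae hmonoF hzero htend hstrict _) ?_
  exact HasSubset.Subset.eventuallyLE
    (Ioi_subset_Ioi (aux_quantile_mono hmonoF hzero htend hcont hu huv hv))

private lemma aux_V_nonneg (hmonoF : Monotone F) (hzero : ∀ x ≤ 0, F x = 0)
    (htend : Tendsto F atTop (nhds 1)) (hstrict : StrictMonoOn F (Ici 0)) (Q : ℝ) :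
    0 ≤ ∫ x in Ioi Q, (1 - F x) :=
  setIntegral_nonneg measurableSet_Ioi fun x _ => by
    linarith [aux_F_lt_one hmonoF hzero htend hstrict x]

private lemma aux_V_pos (hmonoF : Monotone F) (hzero : ∀ x ≤ 0, F x = 0)
    (htend : Tendsto F atTop (nhds 1)) (hstrict : StrictMonoOn F (Ici 0))
    (hFint : IntegrableOn (fun x => 1 - F x) (Ioi 0) volume)
    {Q : ℝ} (hQ : 0 ≤ Q) :
    0 < ∫ x in Ioi Q, (1 - F x) := by
  have hint : IntegrableOn (fun x => 1 - F x) (Ioi Q) volume :=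
    hFint.mono_set (Ioi_subset_Ioi hQ)
  rw [setIntegral_pos_iff_support_of_nonneg_ae
    (aux_Snonneg_ae hmonoF hzero htend hstrict _) hint]
  have hsupp : Function.support (fun x => 1 - F x) ∩ Ioi Q = Ioi Q := by
    refine inter_eq_right.mpr fun x _ => ?_
    have := aux_F_lt_one hmonoF hzero htend hstrict x
    simp only [Function.mem_support]
    intro hc; linarith
  rw [hsupp]
  simp [Real.volume_Ioi]

private lemma aux_V_le_W (hmonoF : Monotone F) (hzero : ∀ x ≤ 0, F x = 0)
    (htend : Tendsto F atTop (nhds 1)) (hstrict : StrictMonoOn F (Ici 0))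
    (hFint : IntegrableOn (fun x => 1 - F x) (Ioi 0) volume)
    (hconc : ConcaveOn ℝ (Icc 0 1) h) (h0 : h 0 = 0) (h1 : h 1 = 1)
    (hinth : IntegrableOn (fun x => h (1 - F x)) (Ioi 0) volume)
    {Q : ℝ} (hQ : 0 ≤ Q) :
    (∫ x in Ioi Q, (1 - F x)) ≤ ∫ x in Ioi Q, h (1 - F x) := by
  refine setIntegral_mono_on (hFint.mono_set (Ioi_subset_Ioi hQ))
    (hinth.mono_set (Ioi_subset_Ioi hQ)) measurableSet_Ioi fun x _ => ?_
  exact aux_h_ge_id hconc h0 h1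
    (by linarith [aux_F_lt_one hmonoF hzero htend hstrict x])
    (by linarith [aux_F_nonneg hmonoF hzero x])

private lemma aux_W_pos (hmonoF : Monotone F) (hzero : ∀ x ≤ 0, F x = 0)
    (htend : Tendsto F atTop (nhds 1)) (hstrict : StrictMonoOn F (Ici 0))
    (hFint : IntegrableOn (fun x => 1 - F x) (Ioi 0) volume)
    (hconc : ConcaveOn ℝ (Icc 0 1) h) (h0 : h 0 = 0) (h1 : h 1 = 1)
    (hinth : IntegrableOn (fun x => h (1 - F x)) (Ioi 0) volume)
    {Q : ℝ} (hQ : 0 ≤ Q) :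
    0 < ∫ x in Ioi Q, h (1 - F x) :=
  lt_of_lt_of_le (aux_V_pos hmonoF hzero htend hstrict hFint hQ)
    (aux_V_le_W hmonoF hzero htend hstrict hFint hconc h0 h1 hinth hQ)

private lemma aux_KV_le_W (hmonoF : Monotone F) (hzero : ∀ x ≤ 0, F x = 0)
    (htend : Tendsto F atTop (nhds 1)) (hstrict : StrictMonoOn F (Ici 0)) (hcont : Continuous F)
    (hFint : IntegrableOn (fun x => 1 - F x) (Ioi 0) volume)
    (hconc : ConcaveOn ℝ (Icc 0 1) h) (h0 : h 0 = 0)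
    (hinth : IntegrableOn (fun x => h (1 - F x)) (Ioi 0) volume)
    {c : ℝ} (hc0 : 0 < c) (hc1 : c < 1) :
    auxK h c * (∫ x in Ioi (quantile F c), (1 - F x))
      ≤ ∫ x in Ioi (quantile F c), h (1 - F x) := by
  obtain ⟨hFQ, hQ0, hQiff⟩ := aux_quantile_spec hmonoF hzero htend hcont hc0 hc1
  rw [← integral_const_mul]
  refine setIntegral_mono_on
    ((hFint.mono_set (Ioi_subset_Ioi (le_of_lt hQ0))).const_mul _)
    (hinth.mono_set (Ioi_subset_Ioi (le_of_lt hQ0))) measurableSet_Ioi fun x hx => ?_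
  have hcx : c ≤ F x := by rw [← hFQ]; exact hmonoF (le_of_lt hx)
  have hFx1 : F x < 1 := aux_F_lt_one hmonoF hzero htend hstrict x
  have heq : h (1 - F x) = (1 - F x) * auxK h (F x) := by
    have hne : (1:ℝ) - F x ≠ 0 := by intro hcon; linarith
    show h (1 - F x) = (1 - F x) * (h (1 - F x) * (1 - F x)⁻¹)
    field_simp
  rw [heq]
  have hKc : auxK h c ≤ auxK h (F x) := auxK_mono hconc h0 (le_of_lt hc0) hcx hFx1
  have hge : 0 ≤ 1 - F x := by linarith
  nlinarith

private lemma aux_tail_small (hmonoF : Monotone F) (hzero : ∀ x ≤ 0, F x = 0)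
    (htend : Tendsto F atTop (nhds 1)) (hstrict : StrictMonoOn F (Ici 0)) (hcont : Continuous F)
    (hinth : IntegrableOn (fun x => h (1 - F x)) (Ioi 0) volume)
    (hnn : ∀ x : ℝ, 0 ≤ h (1 - F x))
    {b ε : ℝ} (hb0 : 0 < b) (hb1 : b < 1) (hε : 0 < ε) :
    ∃ c : ℝ, b < c ∧ c < 1 ∧ (∫ x in Ioi (quantile F c), h (1 - F x)) < ε := by
  set T : ℝ := ∫ x in Ioi (0:ℝ), h (1 - F x) with hT
  have htendI : Tendsto (fun r : ℝ => ∫ x in (0:ℝ)..r, h (1 - F x)) atTop (nhds T) :=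
    intervalIntegral_tendsto_integral_Ioi 0 hinth tendsto_id
  have hev : ∀ᶠ r : ℝ in atTop, T - ε < ∫ x in (0:ℝ)..r, h (1 - F x) :=
    htendI.eventually (eventually_gt_nhds (by linarith))
  obtain ⟨A, hA0, hAtail⟩ : ∃ A : ℝ, 0 ≤ A ∧ T - ε < ∫ x in (0:ℝ)..A, h (1 - F x) := by
    obtain ⟨A, hA⟩ := (hev.and (eventually_ge_atTop (0:ℝ))).exists
    exact ⟨A, hA.2, hA.1⟩
  have htail : (∫ x in Ioi A, h (1 - F x)) < ε := by
    have hsplit := aux_split (fun x => h (1 - F x)) hA0 hinth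
    rw [intervalIntegral.integral_of_le hA0] at hAtail
    rw [← hT] at hsplit
    linarith
  obtain ⟨hFQb, hQb0, hQbiff⟩ := aux_quantile_spec hmonoF hzero htend hcont hb0 hb1
  set M : ℝ := max A (quantile F b) with hM
  set c : ℝ := F (M + 1) with hc
  have hM0 : 0 ≤ M := le_trans hA0 (le_max_left _ _)
  have hbc : b < c := by
    rw [hc, ← hFQb]
    exact hstrict (le_of_lt hQb0) (by simp only [mem_Ici]; linarith)
      (by linarith [le_max_right A (quantile F b)])
  have hc1 : c < 1 := aux_F_lt_one hmonoF hzero htend hstrict (M + 1)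
  obtain ⟨hFQc, hQc0, hQciff⟩ := aux_quantile_spec hmonoF hzero htend hcont
    (lt_trans hb0 hbc) hc1
  have hQcM : M + 1 ≤ quantile F c := by
    by_contra hcon
    push_neg at hcon
    have hlt := hstrict (le_of_lt hQc0)
      (show (M + 1) ∈ Ici (0:ℝ) from by simp only [mem_Ici]; linarith) hcon
    rw [hFQc, ← hc] at hlt
    exact lt_irrefl _ hlt
  refine ⟨c, hbc, hc1, lt_of_le_of_lt ?_ htail⟩
  refine setIntegral_mono_set (hinth.mono_set (Ioi_subset_Ioi hA0))
    (ae_of_all _ fun x => hnn x) (HasSubset.Subset.eventuallyLE (Ioi_subset_Ioi ?_))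
  linarith [le_max_left A (quantile F b)]

private lemma aux_V_aemeasurable (hmonoF : Monotone F) (hzero : ∀ x ≤ 0, F x = 0)
    (htend : Tendsto F atTop (nhds 1)) (hstrict : StrictMonoOn F (Ici 0)) (hcont : Continuous F)
    (hFint : IntegrableOn (fun x => 1 - F x) (Ioi 0) volume)
    {a b : ℝ} (ha : 0 < a) (hb : b < 1) :
    AEMeasurable (fun u => ∫ x in Ioi (quantile F u), (1 - F x))
      (volume.restrict (Ioc a b)) := by
  refine aemeasurable_restrict_of_antitoneOn measurableSet_Ioc ?_
  intro u hu v hv huv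
  exact aux_V_antitone hmonoF hzero htend hstrict hcont hFint (lt_trans ha hu.1) huv
    (lt_of_le_of_lt hv.2 hb)

private lemma aux_integrand_integrable (hmonoF : Monotone F) (hzero : ∀ x ≤ 0, F x = 0)
    (htend : Tendsto F atTop (nhds 1)) (hstrict : StrictMonoOn F (Ici 0)) (hcont : Continuous F)
    (hFint : IntegrableOn (fun x => 1 - F x) (Ioi 0) volume)
    (hmonoh : MonotoneOn h (Icc 0 1)) (hmaps : MapsTo h (Icc 0 1) (Icc 0 1)) (h0 : h 0 = 0)
    (hconc : ConcaveOn ℝ (Icc 0 1) h)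
    (hdiff : ∀ p ∈ Ioo (0:ℝ) 1, DifferentiableAt ℝ h p)
    {a b : ℝ} (ha : 0 < a) (hb : b < 1) (c1 c2 : ℝ) :
    IntegrableOn (fun u => c1 * (deriv (auxK h) u *
      ((∫ x in Ioi (quantile F u), (1 - F x)) - c2))) (Ioc a b) volume := by
  set Va : ℝ := ∫ x in Ioi (quantile F a), (1 - F x) with hVa
  refine Integrable.mono' (g := fun _ => |c1| * (((1 - b) ^ 2)⁻¹ * (Va + |c2|))) ?_ ?_ ?_
  · exact integrableOn_const measure_Ioc_lt_top.ne
  · refine AEMeasurable.aestronglyMeasurable ?_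
    exact (((measurable_deriv (auxK h)).aemeasurable.mul
      ((aux_V_aemeasurable hmonoF hzero htend hstrict hcont hFint ha hb).sub
        aemeasurable_const)).const_mul c1)
  · refine (ae_restrict_iff' measurableSet_Ioc).2 (ae_of_all _ fun u hu => ?_)
    have hu0 : 0 < u := lt_trans ha hu.1
    have hu1 : u < 1 := lt_of_le_of_lt hu.2 hb
    have hK' : |deriv (auxK h) u| ≤ ((1 - b) ^ 2)⁻¹ :=
      auxK_deriv_bound hmonoh hmaps h0 hconc hdiff ha hb (Ioc_subset_Icc_self hu)
    have hVu0 : 0 ≤ ∫ x in Ioi (quantile F u), (1 - F x) :=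
      aux_V_nonneg hmonoF hzero htend hstrict _
    have hVua : (∫ x in Ioi (quantile F u), (1 - F x)) ≤ Va := by
      rw [hVa]
      exact aux_V_antitone hmonoF hzero htend hstrict hcont hFint ha hu.1.le hu1
    have hV2 : |(∫ x in Ioi (quantile F u), (1 - F x)) - c2| ≤ Va + |c2| := by
      have htri : |(∫ x in Ioi (quantile F u), (1 - F x)) - c2|
          ≤ |∫ x in Ioi (quantile F u), (1 - F x)| + |c2| := by
        rw [sub_eq_add_neg]
        simpa [abs_neg] using abs_add_le (∫ x in Ioi (quantile F u), (1 - F x)) (-c2)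
      rw [abs_of_nonneg hVu0] at htri
      linarith
    rw [Real.norm_eq_abs, abs_mul, abs_mul]
    have hb2 : (0:ℝ) ≤ ((1 - b) ^ 2)⁻¹ := le_of_lt (inv_pos.2 (pow_pos (by linarith) 2))
    have := mul_le_mul hK' hV2 (abs_nonneg _) hb2
    exact mul_le_mul_of_nonneg_left this (abs_nonneg c1)

private lemma aux_const_deriv_integrable (hmonoh : MonotoneOn h (Icc 0 1))
    (hmaps : MapsTo h (Icc 0 1) (Icc 0 1)) (h0 : h 0 = 0)
    (hconc : ConcaveOn ℝ (Icc 0 1) h)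
    (hdiff : ∀ p ∈ Ioo (0:ℝ) 1, DifferentiableAt ℝ h p)
    {a b : ℝ} (ha : 0 < a) (hb : b < 1) (c : ℝ) :
    IntegrableOn (fun u => c * deriv (auxK h) u) (Ioc a b) volume :=
  ((auxK_deriv_integrableOn hmonoh hmaps h0 hconc hdiff ha hb).mono_set
    Ioc_subset_Icc_self).const_mul c

end AuxDMRL5

section AuxDMRL6
variable {F G h : ℝ → ℝ}

set_option maxHeartbeats 1000000 in
/-- Inequality (i): `V_F(b) * Δ_G(a,b) ≤ V_G(b) * Δ_F(a,b)`. -/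
private lemma aux_ineq_i
    (hmonoF : Monotone F) (hzeroF : ∀ x ≤ 0, F x = 0) (htendF : Tendsto F atTop (nhds 1))
    (hstrictF : StrictMonoOn F (Ici 0)) (hcontF : Continuous F)
    (hFint : IntegrableOn (fun x => 1 - F x) (Ioi 0) volume)
    (hmonoG : Monotone G) (hzeroG : ∀ x ≤ 0, G x = 0) (htendG : Tendsto G atTop (nhds 1))
    (hstrictG : StrictMonoOn G (Ici 0)) (hcontG : Continuous G)
    (hGint : IntegrableOn (fun x => 1 - G x) (Ioi 0) volume)
    (hmonoh : MonotoneOn h (Icc 0 1)) (hmaps : MapsTo h (Icc 0 1) (Icc 0 1))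
    (h0 : h 0 = 0) (hconc : ConcaveOn ℝ (Icc 0 1) h)
    (hdiff : ∀ p ∈ Ioo (0:ℝ) 1, DifferentiableAt ℝ h p)
    (hcross : ∀ u v : ℝ, 0 < u → u ≤ v → v < 1 →
      (∫ x in Ioi (quantile G u), (1 - G x)) * (∫ x in Ioi (quantile F v), (1 - F x))
        ≤ (∫ x in Ioi (quantile G v), (1 - G x)) * (∫ x in Ioi (quantile F u), (1 - F x)))
    {a b : ℝ} (ha : 0 < a) (hab : a ≤ b) (hb : b < 1) :
    (∫ x in Ioi (quantile F b), (1 - F x)) *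
        (∫ x in Ioc (quantile G a) (quantile G b), h (1 - G x))
      ≤ (∫ x in Ioi (quantile G b), (1 - G x)) *
        (∫ x in Ioc (quantile F a) (quantile F b), h (1 - F x)) := by
  have repF := aux_rep hmonoF hzeroF htendF hstrictF hcontF hFint hmonoh hmaps h0 hconc hdiff
    ha hab hb
  have repG := aux_rep hmonoG hzeroG htendG hstrictG hcontG hGint hmonoh hmaps h0 hconc hdiff
    ha hab hb
  rw [repF, repG, mul_add, mul_add, ← integral_const_mul, ← integral_const_mul]
  set VFa : ℝ := ∫ x in Ioi (quantile F a), (1 - F x) with hVFa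
  set VGa : ℝ := ∫ x in Ioi (quantile G a), (1 - G x) with hVGa
  set VFb : ℝ := ∫ x in Ioi (quantile F b), (1 - F x) with hVFb
  set VGb : ℝ := ∫ x in Ioi (quantile G b), (1 - G x) with hVGb
  clear_value VFa VGa VFb VGb
  have hKa0 : 0 ≤ auxK h a := auxK_nonneg hmaps (le_of_lt ha) (lt_of_le_of_lt hab hb)
  have t1 : VFb * (auxK h a * (VGa - VGb)) ≤ VGb * (auxK h a * (VFa - VFb)) := by
    have hcr := hcross a b ha hab hb
    rw [← hVFa, ← hVGa, ← hVFb, ← hVGb] at hcr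
    nlinarith [mul_nonneg hKa0 (sub_nonneg.mpr hcr)]
  have t2 : (∫ u in Ioc a b, VFb * (deriv (auxK h) u *
        ((∫ x in Ioi (quantile G u), (1 - G x)) - VGb)))
      ≤ ∫ u in Ioc a b, VGb * (deriv (auxK h) u *
        ((∫ x in Ioi (quantile F u), (1 - F x)) - VFb)) := by
    refine setIntegral_mono_on
      (aux_integrand_integrable hmonoG hzeroG htendG hstrictG hcontG hGint hmonoh hmaps h0
        hconc hdiff ha hb VFb VGb)
      (aux_integrand_integrable hmonoF hzeroF htendF hstrictF hcontF hFint hmonoh hmaps h0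
        hconc hdiff ha hb VGb VFb)
      measurableSet_Ioc fun u hu => ?_
    have hu0 : 0 < u := lt_trans ha hu.1
    have hu1 : u < 1 := lt_of_le_of_lt hu.2 hb
    have hK'0 : 0 ≤ deriv (auxK h) u := auxK_deriv_nonneg hmonoh h0 hconc hdiff ⟨hu0, hu1⟩
    have hcr := hcross u b hu0 hu.2 hb
    set K' : ℝ := deriv (auxK h) u with hK'
    set VFu : ℝ := ∫ x in Ioi (quantile F u), (1 - F x) with hVFu
    set VGu : ℝ := ∫ x in Ioi (quantile G u), (1 - G x) with hVGu
    clear_value K' VFu VGu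
    rw [← hVFb, ← hVGb] at hcr
    nlinarith [mul_nonneg hK'0 (sub_nonneg.mpr hcr)]
  exact add_le_add t1 t2

set_option maxHeartbeats 1000000 in
/-- Inequality (ii): `V_G(b) * W_F(b) ≤ V_F(b) * W_G(b)`. -/
private lemma aux_ineq_ii
    (hmonoF : Monotone F) (hzeroF : ∀ x ≤ 0, F x = 0) (htendF : Tendsto F atTop (nhds 1))
    (hstrictF : StrictMonoOn F (Ici 0)) (hcontF : Continuous F)
    (hFint : IntegrableOn (fun x => 1 - F x) (Ioi 0) volume)
    (hmonoG : Monotone G) (hzeroG : ∀ x ≤ 0, G x = 0) (htendG : Tendsto G atTop (nhds 1))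
    (hstrictG : StrictMonoOn G (Ici 0)) (hcontG : Continuous G)
    (hGint : IntegrableOn (fun x => 1 - G x) (Ioi 0) volume)
    (hmonoh : MonotoneOn h (Icc 0 1)) (hmaps : MapsTo h (Icc 0 1) (Icc 0 1))
    (h0 : h 0 = 0) (hconc : ConcaveOn ℝ (Icc 0 1) h)
    (hdiff : ∀ p ∈ Ioo (0:ℝ) 1, DifferentiableAt ℝ h p)
    (hinthF : IntegrableOn (fun x => h (1 - F x)) (Ioi 0) volume)
    (hinthG : IntegrableOn (fun x => h (1 - G x)) (Ioi 0) volume)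
    (hcross : ∀ u v : ℝ, 0 < u → u ≤ v → v < 1 →
      (∫ x in Ioi (quantile G u), (1 - G x)) * (∫ x in Ioi (quantile F v), (1 - F x))
        ≤ (∫ x in Ioi (quantile G v), (1 - G x)) * (∫ x in Ioi (quantile F u), (1 - F x)))
    {b : ℝ} (hb0 : 0 < b) (hb1 : b < 1) :
    (∫ x in Ioi (quantile G b), (1 - G x)) * (∫ x in Ioi (quantile F b), h (1 - F x))
      ≤ (∫ x in Ioi (quantile F b), (1 - F x)) * (∫ x in Ioi (quantile G b), h (1 - G x)) := by
  have hVFb0' : 0 < ∫ x in Ioi (quantile F b), (1 - F x) := by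
    obtain ⟨_, hQ0, _⟩ := aux_quantile_spec hmonoF hzeroF htendF hcontF hb0 hb1
    exact aux_V_pos hmonoF hzeroF htendF hstrictF hFint (le_of_lt hQ0)
  have hVGb0' : 0 < ∫ x in Ioi (quantile G b), (1 - G x) := by
    obtain ⟨_, hQ0, _⟩ := aux_quantile_spec hmonoG hzeroG htendG hcontG hb0 hb1
    exact aux_V_pos hmonoG hzeroG htendG hstrictG hGint (le_of_lt hQ0)
  refine le_of_forall_pos_le_add fun ε hε => ?_
  obtain ⟨c, hbc, hc1, hWFcbound⟩ := aux_tail_small hmonoF hzeroF htendF hstrictF hcontF hinthF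
    (fun x => (hmaps ⟨by linarith [aux_F_lt_one hmonoF hzeroF htendF hstrictF x],
      by linarith [aux_F_nonneg hmonoF hzeroF x]⟩).1)
    hb0 hb1 (div_pos hε hVGb0')
  have hc0 : 0 < c := lt_trans hb0 hbc
  have hbc' : b ≤ c := le_of_lt hbc
  obtain ⟨hFQb, hQFb0, _⟩ := aux_quantile_spec hmonoF hzeroF htendF hcontF hb0 hb1
  obtain ⟨hGQb, hQGb0, _⟩ := aux_quantile_spec hmonoG hzeroG htendG hcontG hb0 hb1
  have hsplitF : ∫ x in Ioi (quantile F b), h (1 - F x)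
      = (∫ x in Ioc (quantile F b) (quantile F c), h (1 - F x))
        + ∫ x in Ioi (quantile F c), h (1 - F x) :=
    aux_split _ (aux_quantile_mono hmonoF hzeroF htendF hcontF hb0 hbc' hc1)
      (hinthF.mono_set (Ioi_subset_Ioi (le_of_lt hQFb0)))
  have hsplitG : ∫ x in Ioi (quantile G b), h (1 - G x)
      = (∫ x in Ioc (quantile G b) (quantile G c), h (1 - G x))
        + ∫ x in Ioi (quantile G c), h (1 - G x) :=
    aux_split _ (aux_quantile_mono hmonoG hzeroG htendG hcontG hb0 hbc' hc1)
      (hinthG.mono_set (Ioi_subset_Ioi (le_of_lt hQGb0)))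
  have repF := aux_rep hmonoF hzeroF htendF hstrictF hcontF hFint hmonoh hmaps h0 hconc hdiff
    hb0 hbc' hc1
  have repG := aux_rep hmonoG hzeroG htendG hstrictG hcontG hGint hmonoh hmaps h0 hconc hdiff
    hb0 hbc' hc1
  have hKVG : auxK h c * (∫ x in Ioi (quantile G c), (1 - G x))
      ≤ ∫ x in Ioi (quantile G c), h (1 - G x) :=
    aux_KV_le_W hmonoG hzeroG htendG hstrictG hcontG hGint hconc h0 hinthG hc0 hc1
  have hVFc0' : 0 ≤ ∫ x in Ioi (quantile F c), (1 - F x) :=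
    aux_V_nonneg hmonoF hzeroF htendF hstrictF _
  have hWGc0' : 0 ≤ ∫ x in Ioi (quantile G c), h (1 - G x) :=
    setIntegral_nonneg measurableSet_Ioi fun x _ =>
      (hmaps ⟨by linarith [aux_F_lt_one hmonoG hzeroG htendG hstrictG x],
        by linarith [aux_F_nonneg hmonoG hzeroG x]⟩).1
  have hFTC : (∫ u in Ioc b c, deriv (auxK h) u) = auxK h c - auxK h b :=
    auxK_FTC hmonoh hmaps h0 hconc hdiff hb0 hbc' hc1
  -- introduce abbreviations
  set VFb : ℝ := ∫ x in Ioi (quantile F b), (1 - F x) with hVFb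
  set VGb : ℝ := ∫ x in Ioi (quantile G b), (1 - G x) with hVGb
  set VFc : ℝ := ∫ x in Ioi (quantile F c), (1 - F x) with hVFc
  set VGc : ℝ := ∫ x in Ioi (quantile G c), (1 - G x) with hVGc
  set WFb : ℝ := ∫ x in Ioi (quantile F b), h (1 - F x) with hWFb
  set WGb : ℝ := ∫ x in Ioi (quantile G b), h (1 - G x) with hWGb
  set WFc : ℝ := ∫ x in Ioi (quantile F c), h (1 - F x) with hWFcd
  set WGc : ℝ := ∫ x in Ioi (quantile G c), h (1 - G x) with hWGcd
  set DF : ℝ := ∫ x in Ioc (quantile F b) (quantile F c), h (1 - F x) with hDF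
  set DG : ℝ := ∫ x in Ioc (quantile G b) (quantile G c), h (1 - G x) with hDG
  set Kb : ℝ := auxK h b with hKb
  set Kc : ℝ := auxK h c with hKc
  have hKb0 : 0 ≤ Kb := by rw [hKb]; exact auxK_nonneg hmaps (le_of_lt hb0) hb1
  have hKc0 : 0 ≤ Kc := by rw [hKc]; exact auxK_nonneg hmaps (le_of_lt hc0) hc1
  have hVGb0 : 0 < VGb := hVGb0'
  have hVFb0 : 0 < VFb := hVFb0'
  clear_value VFb VGb VFc VGc WFb WGb WFc WGc DF DG Kb Kc
  -- the integral comparison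
  have hIneq : (∫ u in Ioc b c, (VGb * (deriv (auxK h) u *
        ((∫ x in Ioi (quantile F u), (1 - F x)) - VFc))
          + (VGb * VFc - VFb * VGc) * deriv (auxK h) u))
      ≤ ∫ u in Ioc b c, VFb * (deriv (auxK h) u *
        ((∫ x in Ioi (quantile G u), (1 - G x)) - VGc)) := by
    refine setIntegral_mono_on
      ((aux_integrand_integrable hmonoF hzeroF htendF hstrictF hcontF hFint hmonoh hmaps h0
        hconc hdiff hb0 hc1 VGb VFc).add
        (aux_const_deriv_integrable hmonoh hmaps h0 hconc hdiff hb0 hc1 _))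
      (aux_integrand_integrable hmonoG hzeroG htendG hstrictG hcontG hGint hmonoh hmaps h0
        hconc hdiff hb0 hc1 VFb VGc)
      measurableSet_Ioc fun u hu => ?_
    have hu0 : 0 < u := lt_trans hb0 hu.1
    have hu1 : u < 1 := lt_of_le_of_lt hu.2 hc1
    have hK'0 : 0 ≤ deriv (auxK h) u := auxK_deriv_nonneg hmonoh h0 hconc hdiff ⟨hu0, hu1⟩
    have hcr := hcross b u hb0 (le_of_lt hu.1) hu1
    set K' : ℝ := deriv (auxK h) u with hK'
    set VFu : ℝ := ∫ x in Ioi (quantile F u), (1 - F x) with hVFu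
    set VGu : ℝ := ∫ x in Ioi (quantile G u), (1 - G x) with hVGu
    clear_value K' VFu VGu
    rw [← hVFb, ← hVGb] at hcr
    nlinarith [mul_nonneg hK'0 (sub_nonneg.mpr hcr)]
  have hsum : (∫ u in Ioc b c, (VGb * (deriv (auxK h) u *
        ((∫ x in Ioi (quantile F u), (1 - F x)) - VFc))
          + (VGb * VFc - VFb * VGc) * deriv (auxK h) u))
      = (∫ u in Ioc b c, VGb * (deriv (auxK h) u *
          ((∫ x in Ioi (quantile F u), (1 - F x)) - VFc)))
        + (VGb * VFc - VFb * VGc) * (Kc - Kb) := by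
    rw [integral_add
      (aux_integrand_integrable hmonoF hzeroF htendF hstrictF hcontF hFint hmonoh hmaps h0
        hconc hdiff hb0 hc1 VGb VFc)
      (aux_const_deriv_integrable hmonoh hmaps h0 hconc hdiff hb0 hc1 _)]
    congr 1
    rw [integral_const_mul, hFTC]
  -- multiplied representations
  have hmulF : VGb * DF = VGb * (Kb * (VFb - VFc))
      + ∫ u in Ioc b c, VGb * (deriv (auxK h) u *
          ((∫ x in Ioi (quantile F u), (1 - F x)) - VFc)) := by
    rw [repF, mul_add, ← integral_const_mul]
  have hmulG : VFb * DG = VFb * (Kb * (VGb - VGc))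
      + ∫ u in Ioc b c, VFb * (deriv (auxK h) u *
          ((∫ x in Ioi (quantile G u), (1 - G x)) - VGc)) := by
    rw [repG, mul_add, ← integral_const_mul]
  -- key inequality
  have key : VGb * DF + Kc * (VGb * VFc) - Kc * (VFb * VGc) ≤ VFb * DG := by
    rw [hsum] at hIneq
    have hXY : VFb * (Kb * (VGb - VGc)) - VGb * (Kb * (VFb - VFc))
        + (VGb * VFc - VFb * VGc) * (Kc - Kb)
        = Kc * (VGb * VFc) - Kc * (VFb * VGc) := by ring
    linarith [hIneq, hmulF, hmulG, hXY]
  clear hIneq hsum hmulF hmulG repF repG hFTC hVFb hVGb hVFc hVGc hWFb hWGb hWFcd hWGcd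
    hDF hDG hKb hKc hcross
  have hterm1 : 0 ≤ Kc * (VGb * VFc) :=
    mul_nonneg hKc0 (mul_nonneg (le_of_lt hVGb0) hVFc0')
  have hterm2 : Kc * (VFb * VGc) ≤ VFb * WGc := by
    have h2 := mul_le_mul_of_nonneg_left hKVG (le_of_lt hVFb0)
    nlinarith [h2]
  have hchain : VGb * WFb ≤ VFb * WGb + VGb * WFc := by
    rw [hsplitF, hsplitG]
    nlinarith [key, hterm1, hterm2]
  have herr : VGb * WFc < ε := by
    rw [← lt_div_iff₀' hVGb0]
    exact hWFcbound
  linarith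
end AuxDMRL6

private noncomputable def auxT (h : ℝ → ℝ) (p : ℝ) : ℝ :=
  sSup {t : ℝ | t ∈ Icc (0:ℝ) 1 ∧ h t ≤ 1 - p}

section AuxDMRL7
variable {F G h : ℝ → ℝ}

private lemma aux_T_le_one (h0 : h 0 = 0) {p : ℝ} (hp1 : p < 1) : auxT h p ≤ 1 := by
  refine csSup_le ⟨0, ⟨by simp, by rw [h0]; linarith⟩⟩ fun t ht => ht.1.2

private lemma aux_T_bddAbove (h : ℝ → ℝ) (p : ℝ) :
    BddAbove {t : ℝ | t ∈ Icc (0:ℝ) 1 ∧ h t ≤ 1 - p} :=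
  ⟨1, fun t ht => ht.1.2⟩

private lemma aux_T_spec (hmonoh : MonotoneOn h (Icc 0 1))
    (hleft : ∀ q ∈ Ioc (0:ℝ) 1, ContinuousWithinAt h (Iio q) q)
    (h0 : h 0 = 0) (h1 : h 1 = 1)
    {p : ℝ} (hp0 : 0 < p) (hp1 : p < 1) (hT0 : 0 < auxT h p) :
    auxT h p < 1 ∧ ∀ t, 0 ≤ t → t ≤ 1 → (h t ≤ 1 - p ↔ t ≤ auxT h p) := by
  have hne : (0:ℝ) ∈ {t : ℝ | t ∈ Icc (0:ℝ) 1 ∧ h t ≤ 1 - p} :=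
    ⟨by simp, by rw [h0]; linarith⟩
  have hbdd := aux_T_bddAbove h p
  have hT1 : auxT h p ≤ 1 := aux_T_le_one h0 hp1
  have hhT : h (auxT h p) ≤ 1 - p := by
    have hcw : Tendsto h (nhdsWithin (auxT h p) (Iio (auxT h p))) (nhds (h (auxT h p))) :=
      hleft (auxT h p) ⟨hT0, hT1⟩
    refine le_of_tendsto hcw ?_
    have hev1 : ∀ᶠ u in nhdsWithin (auxT h p) (Iio (auxT h p)), 0 < u :=
      eventually_nhdsWithin_of_eventually_nhds (eventually_gt_nhds hT0)
    have hev2 : ∀ᶠ u in nhdsWithin (auxT h p) (Iio (auxT h p)), u < auxT h p :=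
      eventually_mem_nhdsWithin
    filter_upwards [hev1, hev2] with u hu1 hu2
    obtain ⟨s, hsS, hus⟩ := exists_lt_of_lt_csSup ⟨0, hne⟩ hu2
    exact le_trans (hmonoh ⟨le_of_lt hu1, by linarith [hsS.1.2]⟩ hsS.1 (le_of_lt hus)) hsS.2
  have hTlt1 : auxT h p < 1 := by
    rcases lt_or_eq_of_le hT1 with hlt | heq
    · exact hlt
    · rw [heq, h1] at hhT; linarith
  refine ⟨hTlt1, fun t ht0 ht1 => ⟨fun hht => le_csSup hbdd ⟨⟨ht0, ht1⟩, hht⟩, fun htT => ?_⟩⟩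
  exact le_trans (hmonoh ⟨ht0, ht1⟩ ⟨le_trans ht0 htT, hT1⟩ htT) hhT

private lemma aux_T_pos (hmonoF : Monotone F) (hzeroF : ∀ x ≤ 0, F x = 0)
    (htendF : Tendsto F atTop (nhds 1)) (hstrictF : StrictMonoOn F (Ici 0))
    (hinth : IntegrableOn (fun x => h (1 - F x)) (Ioi 0) volume)
    {p : ℝ} (hp0 : 0 < p) (hp1 : p < 1) : 0 < auxT h p := by
  by_contra hc
  push_neg at hc
  have hkey : ∀ x : ℝ, 1 - p ≤ h (1 - F x) := by
    intro x
    have hSx0 : 0 < 1 - F x := by linarith [aux_F_lt_one hmonoF hzeroF htendF hstrictF x]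
    have hSx1 : 1 - F x ≤ 1 := by linarith [aux_F_nonneg hmonoF hzeroF x]
    by_contra hhx
    push_neg at hhx
    have hmem : (1 - F x) ∈ {t : ℝ | t ∈ Icc (0:ℝ) 1 ∧ h t ≤ 1 - p} :=
      ⟨⟨le_of_lt hSx0, hSx1⟩, le_of_lt hhx⟩
    have := le_csSup (aux_T_bddAbove h p) hmem
    have : (1:ℝ) - F x ≤ 0 := le_trans this hc
    linarith
  have hmark := hinth.measure_ge_lt_top (show (0:ℝ) < 1 - p by linarith)
  have hset : {x : ℝ | 1 - p ≤ h (1 - F x)} = univ := eq_univ_of_forall hkey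
  rw [hset, Measure.restrict_apply_univ] at hmark
  rw [Real.volume_Ioi] at hmark
  simp at hmark

private lemma aux_T_antitone (h0 : h 0 = 0) {p q : ℝ} (hpq : p ≤ q) (hq1 : q < 1) :
    auxT h q ≤ auxT h p := by
  refine csSup_le_csSup (aux_T_bddAbove h p) ⟨0, ⟨by simp, by rw [h0]; linarith⟩⟩ ?_
  intro t ht
  exact ⟨ht.1, by linarith [ht.2]⟩

/-- In the integrable case, the quantile of the distorted CDF is a quantile of `F`. -/
private lemma aux_distorted_quantile (hmonoF : Monotone F) (hzeroF : ∀ x ≤ 0, F x = 0)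
    (htendF : Tendsto F atTop (nhds 1)) (hstrictF : StrictMonoOn F (Ici 0))
    (hmonoh : MonotoneOn h (Icc 0 1))
    (hleft : ∀ q ∈ Ioc (0:ℝ) 1, ContinuousWithinAt h (Iio q) q)
    (h0 : h 0 = 0) (h1 : h 1 = 1)
    (hinth : IntegrableOn (fun x => h (1 - F x)) (Ioi 0) volume)
    {p : ℝ} (hp0 : 0 < p) (hp1 : p < 1) :
    quantile (distortedCDF h F) p = quantile F (1 - auxT h p) := by
  have hT0 := aux_T_pos hmonoF hzeroF htendF hstrictF hinth hp0 hp1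
  obtain ⟨hT1, hiff⟩ := aux_T_spec hmonoh hleft h0 h1 hp0 hp1 hT0
  have hsets : {x : ℝ | p ≤ distortedCDF h F x} = {x : ℝ | 1 - auxT h p ≤ F x} := by
    ext x
    have hSx0 : 0 ≤ 1 - F x := by linarith [aux_F_lt_one hmonoF hzeroF htendF hstrictF x]
    have hSx1 : 1 - F x ≤ 1 := by linarith [aux_F_nonneg hmonoF hzeroF x]
    simp only [mem_setOf_eq, distortedCDF]
    constructor
    · intro hx
      have : h (1 - F x) ≤ 1 - p := by linarith
      have := (hiff _ hSx0 hSx1).mp this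
      linarith
    · intro hx
      have : (1 : ℝ) - F x ≤ auxT h p := by linarith
      have := (hiff _ hSx0 hSx1).mpr this
      linarith
  unfold quantile
  rw [hsets]

private lemma aux_distorted_quantile_nonneg (hmonoF : Monotone F)
    (hzeroF : ∀ x ≤ 0, F x = 0) (h1 : h 1 = 1) {p : ℝ} (hp0 : 0 < p) :
    0 ≤ quantile (distortedCDF h F) p := by
  have hsub : {x : ℝ | p ≤ distortedCDF h F x} ⊆ Ioi 0 := by
    intro x hx
    simp only [mem_setOf_eq, distortedCDF] at hx
    by_contra hx0
    rw [mem_Ioi, not_lt] at *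
    rw [hzeroF x (by linarith [hx0]), sub_zero, h1] at hx
    linarith
  rcases eq_empty_or_nonempty {x : ℝ | p ≤ distortedCDF h F x} with he | hne
  · unfold quantile
    rw [he, Real.sInf_empty]
  · exact le_csInf hne fun x hx => le_of_lt (hsub hx)

private lemma aux_ew_distorted (p : ℝ) :
    ewIntegral (distortedCDF h F) p
      = ∫ x in Ioi (quantile (distortedCDF h F) p), h (1 - F x) := by
  unfold ewIntegral
  congr 1
  funext x
  simp [distortedCDF]

/-- In the non-integrable case, the distorted excess-wealth integral vanishes. -/
private lemma aux_W_zero (hmonoF : Monotone F) (hzeroF : ∀ x ≤ 0, F x = 0)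
    (htendF : Tendsto F atTop (nhds 1)) (hstrictF : StrictMonoOn F (Ici 0))
    (hcontF : Continuous F) (hmonoh : MonotoneOn h (Icc 0 1))
    (hmaps : MapsTo h (Icc 0 1) (Icc 0 1)) (h1 : h 1 = 1)
    (hninth : ¬ IntegrableOn (fun x => h (1 - F x)) (Ioi 0) volume)
    {p : ℝ} (hp0 : 0 < p) : ewIntegral (distortedCDF h F) p = 0 := by
  rw [aux_ew_distorted]
  set Q : ℝ := quantile (distortedCDF h F) p with hQ
  have hQ0 : 0 ≤ Q := aux_distorted_quantile_nonneg hmonoF hzeroF h1 hp0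
  refine integral_undef fun hint => ?_
  refine hninth ?_
  have hsplit : Ioi (0:ℝ) = Ioc 0 Q ∪ Ioi Q := (Ioc_union_Ioi_eq_Ioi hQ0).symm
  rw [hsplit]
  refine IntegrableOn.union ?_ hint
  refine Integrable.mono' (g := fun _ => (1:ℝ)) (integrableOn_const measure_Ioc_lt_top.ne)
    ((aux_hS_measurable hmonoF hzeroF htendF hcontF hmonoh).aestronglyMeasurable) ?_
  refine ae_of_all _ fun x => ?_
  have hb := hmaps (show 1 - F x ∈ Icc (0:ℝ) 1 from
    ⟨by linarith [aux_F_lt_one hmonoF hzeroF htendF hstrictF x],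
     by linarith [aux_F_nonneg hmonoF hzeroF x]⟩)
  rw [Real.norm_eq_abs, abs_of_nonneg hb.1]
  exact hb.2

end AuxDMRL7
section AuxDMRL8
variable {F G h : ℝ → ℝ}

set_option maxHeartbeats 1000000 in
/-- Cross-multiplied monotonicity of the distorted excess-wealth ratio. -/
private lemma aux_cross
    (hmonoF : Monotone F) (hzeroF : ∀ x ≤ 0, F x = 0) (htendF : Tendsto F atTop (nhds 1))
    (hstrictF : StrictMonoOn F (Ici 0)) (hcontF : Continuous F)
    (hFint : IntegrableOn (fun x => 1 - F x) (Ioi 0) volume)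
    (hmonoG : Monotone G) (hzeroG : ∀ x ≤ 0, G x = 0) (htendG : Tendsto G atTop (nhds 1))
    (hstrictG : StrictMonoOn G (Ici 0)) (hcontG : Continuous G)
    (hGint : IntegrableOn (fun x => 1 - G x) (Ioi 0) volume)
    (hmonoh : MonotoneOn h (Icc 0 1)) (hmaps : MapsTo h (Icc 0 1) (Icc 0 1))
    (h0 : h 0 = 0) (h1 : h 1 = 1) (hconc : ConcaveOn ℝ (Icc 0 1) h)
    (hdiff : ∀ p ∈ Ioo (0:ℝ) 1, DifferentiableAt ℝ h p)
    (hinthF : IntegrableOn (fun x => h (1 - F x)) (Ioi 0) volume)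
    (hinthG : IntegrableOn (fun x => h (1 - G x)) (Ioi 0) volume)
    (hcross : ∀ u v : ℝ, 0 < u → u ≤ v → v < 1 →
      (∫ x in Ioi (quantile G u), (1 - G x)) * (∫ x in Ioi (quantile F v), (1 - F x))
        ≤ (∫ x in Ioi (quantile G v), (1 - G x)) * (∫ x in Ioi (quantile F u), (1 - F x)))
    {a b : ℝ} (ha : 0 < a) (hab : a ≤ b) (hb : b < 1) :
    (∫ x in Ioi (quantile G a), h (1 - G x)) * (∫ x in Ioi (quantile F b), h (1 - F x))
      ≤ (∫ x in Ioi (quantile G b), h (1 - G x)) * (∫ x in Ioi (quantile F a), h (1 - F x)) := by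
  have hb0 : 0 < b := lt_of_lt_of_le ha hab
  have ha1 : a < 1 := lt_of_le_of_lt hab hb
  obtain ⟨_, hQFa0, _⟩ := aux_quantile_spec hmonoF hzeroF htendF hcontF ha ha1
  obtain ⟨_, hQGa0, _⟩ := aux_quantile_spec hmonoG hzeroG htendG hcontG ha ha1
  obtain ⟨_, hQFb0, _⟩ := aux_quantile_spec hmonoF hzeroF htendF hcontF hb0 hb
  have hsplitF : ∫ x in Ioi (quantile F a), h (1 - F x)
      = (∫ x in Ioc (quantile F a) (quantile F b), h (1 - F x))
        + ∫ x in Ioi (quantile F b), h (1 - F x) :=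
    aux_split _ (aux_quantile_mono hmonoF hzeroF htendF hcontF ha hab hb)
      (hinthF.mono_set (Ioi_subset_Ioi (le_of_lt hQFa0)))
  have hsplitG : ∫ x in Ioi (quantile G a), h (1 - G x)
      = (∫ x in Ioc (quantile G a) (quantile G b), h (1 - G x))
        + ∫ x in Ioi (quantile G b), h (1 - G x) :=
    aux_split _ (aux_quantile_mono hmonoG hzeroG htendG hcontG ha hab hb)
      (hinthG.mono_set (Ioi_subset_Ioi (le_of_lt hQGa0)))
  have hi := aux_ineq_i hmonoF hzeroF htendF hstrictF hcontF hFint hmonoG hzeroG htendG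
    hstrictG hcontG hGint hmonoh hmaps h0 hconc hdiff hcross ha hab hb
  have hii := aux_ineq_ii hmonoF hzeroF htendF hstrictF hcontF hFint hmonoG hzeroG htendG
    hstrictG hcontG hGint hmonoh hmaps h0 hconc hdiff hinthF hinthG hcross hb0 hb
  have hVFb0 : 0 < ∫ x in Ioi (quantile F b), (1 - F x) :=
    aux_V_pos hmonoF hzeroF htendF hstrictF hFint (le_of_lt hQFb0)
  have hDF0 : 0 ≤ ∫ x in Ioc (quantile F a) (quantile F b), h (1 - F x) :=
    setIntegral_nonneg measurableSet_Ioc fun x _ =>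
      (hmaps ⟨by linarith [aux_F_lt_one hmonoF hzeroF htendF hstrictF x],
        by linarith [aux_F_nonneg hmonoF hzeroF x]⟩).1
  have hWFb0 : 0 ≤ ∫ x in Ioi (quantile F b), h (1 - F x) :=
    setIntegral_nonneg measurableSet_Ioi fun x _ =>
      (hmaps ⟨by linarith [aux_F_lt_one hmonoF hzeroF htendF hstrictF x],
        by linarith [aux_F_nonneg hmonoF hzeroF x]⟩).1
  rw [hsplitF, hsplitG]
  set VFb : ℝ := ∫ x in Ioi (quantile F b), (1 - F x) with hVFbd
  set VGb : ℝ := ∫ x in Ioi (quantile G b), (1 - G x) with hVGbd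
  set DF : ℝ := ∫ x in Ioc (quantile F a) (quantile F b), h (1 - F x) with hDFd
  set DG : ℝ := ∫ x in Ioc (quantile G a) (quantile G b), h (1 - G x) with hDGd
  set WFb : ℝ := ∫ x in Ioi (quantile F b), h (1 - F x) with hWFbd
  set WGb : ℝ := ∫ x in Ioi (quantile G b), h (1 - G x) with hWGbd
  clear_value VFb VGb DF DG WFb WGb
  clear hsplitF hsplitG hVFbd hVGbd hDFd hDGd hWFbd hWGbd hcross
  -- hi : VFb * DG ≤ VGb * DF ; hii : VGb * WFb ≤ VFb * WGb
  have step1 : VFb * (DG * WFb) ≤ VFb * (WGb * DF) := by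
    nlinarith [mul_le_mul_of_nonneg_right hi hWFb0, mul_le_mul_of_nonneg_left hii hDF0]
  have step2 : DG * WFb ≤ WGb * DF := le_of_mul_le_mul_left step1 hVFb0
  nlinarith [step2]

end AuxDMRL8

/-- **Remark 1 (preservation of the dmrl order by concave distortions).**
Let `X`, `Y` be nonnegative absolutely continuous random variables with finite means and
strictly increasing distribution functions `F`, `G`, and let `h` be a concave, strictly
increasing, differentiable distortion function.  If `X ≤_dmrl Y`, then `X_h ≤_dmrl Y_h`. -/
theorem dmrl_preserved_by_concave_distortion
    (F G f g h : ℝ → ℝ)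
    (hF : IsNonnegCDF F) (hG : IsNonnegCDF G)
    (hFstrict : StrictMonoOn F (Ici 0)) (hGstrict : StrictMonoOn G (Ici 0))
    (hfd : ∀ x : ℝ, HasDerivAt F (f x) x) (hgd : ∀ x : ℝ, HasDerivAt G (g x) x)
    (hFmean : IntegrableOn (fun x => 1 - F x) (Ioi 0) volume)
    (hGmean : IntegrableOn (fun x => 1 - G x) (Ioi 0) volume)
    (hdist : IsDistortionFn h) (hstrict : StrictMonoOn h (Icc 0 1))
    (hdiff : ∀ p ∈ Ioo (0:ℝ) 1, DifferentiableAt ℝ h p)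
    (hconc : ConcaveOn ℝ (Icc 0 1) h)
    (hle : DMRL_le F G) :
    DMRL_le (distortedCDF h F) (distortedCDF h G) := by
  obtain ⟨hmonoF, hzeroF, htendF⟩ := hF
  obtain ⟨hmonoG, hzeroG, htendG⟩ := hG
  obtain ⟨hmonoh, hleft, h0, h1, hmaps⟩ := hdist
  have hcontF : Continuous F :=
    continuous_iff_continuousAt.mpr fun x => (hfd x).continuousAt
  have hcontG : Continuous G :=
    continuous_iff_continuousAt.mpr fun x => (hgd x).continuousAt
  intro p hp q hq hpq
  show ewIntegral (distortedCDF h G) p / ewIntegral (distortedCDF h F) p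
    ≤ ewIntegral (distortedCDF h G) q / ewIntegral (distortedCDF h F) q
  by_cases hintF : IntegrableOn (fun x => h (1 - F x)) (Ioi 0) volume
  · by_cases hintG : IntegrableOn (fun x => h (1 - G x)) (Ioi 0) volume
    · -- main case: both distorted survival functions integrable
      have hcross : ∀ u v : ℝ, 0 < u → u ≤ v → v < 1 →
          (∫ x in Ioi (quantile G u), (1 - G x)) * (∫ x in Ioi (quantile F v), (1 - F x))
            ≤ (∫ x in Ioi (quantile G v), (1 - G x))
              * (∫ x in Ioi (quantile F u), (1 - F x)) := by
        intro u v hu huv hv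
        have hratio := hle (Set.mem_Ioo.mpr ⟨hu, lt_of_le_of_lt huv hv⟩)
          (Set.mem_Ioo.mpr ⟨lt_of_lt_of_le hu huv, hv⟩) huv
        simp only at hratio
        have hVFu : 0 < ewIntegral F u := by
          obtain ⟨_, hQ0, _⟩ := aux_quantile_spec hmonoF hzeroF htendF hcontF hu
            (lt_of_le_of_lt huv hv)
          exact aux_V_pos hmonoF hzeroF htendF hFstrict hFmean (le_of_lt hQ0)
        have hVFv : 0 < ewIntegral F v := by
          obtain ⟨_, hQ0, _⟩ := aux_quantile_spec hmonoF hzeroF htendF hcontF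
            (lt_of_lt_of_le hu huv) hv
          exact aux_V_pos hmonoF hzeroF htendF hFstrict hFmean (le_of_lt hQ0)
        rw [div_le_div_iff₀ hVFu hVFv] at hratio
        exact hratio
      have hTp0 := aux_T_pos hmonoF hzeroF htendF hFstrict hintF hp.1 hp.2
      have hTq0 := aux_T_pos hmonoF hzeroF htendF hFstrict hintF hq.1 hq.2
      obtain ⟨hTp1, _⟩ := aux_T_spec hmonoh hleft h0 h1 hp.1 hp.2 hTp0
      obtain ⟨hTq1, _⟩ := aux_T_spec hmonoh hleft h0 h1 hq.1 hq.2 hTq0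
      have hφp0 : 0 < 1 - auxT h p := by linarith
      have hφp1 : 1 - auxT h p < 1 := by linarith
      have hφq0 : 0 < 1 - auxT h q := by linarith
      have hφq1 : 1 - auxT h q < 1 := by linarith
      have hφpq : 1 - auxT h p ≤ 1 - auxT h q := by
        have := aux_T_antitone h0 hpq hq.2
        linarith
      rw [aux_ew_distorted p, aux_ew_distorted q, aux_ew_distorted p, aux_ew_distorted q]
      rw [aux_distorted_quantile hmonoF hzeroF htendF hFstrict hmonoh hleft h0 h1 hintF
          hp.1 hp.2,
        aux_distorted_quantile hmonoF hzeroF htendF hFstrict hmonoh hleft h0 h1 hintF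
          hq.1 hq.2,
        aux_distorted_quantile hmonoG hzeroG htendG hGstrict hmonoh hleft h0 h1 hintG
          hp.1 hp.2,
        aux_distorted_quantile hmonoG hzeroG htendG hGstrict hmonoh hleft h0 h1 hintG
          hq.1 hq.2]
      have hWFp : 0 < ∫ x in Ioi (quantile F (1 - auxT h p)), h (1 - F x) := by
        obtain ⟨_, hQ0, _⟩ := aux_quantile_spec hmonoF hzeroF htendF hcontF hφp0 hφp1
        exact aux_W_pos hmonoF hzeroF htendF hFstrict hFmean hconc h0 h1 hintF (le_of_lt hQ0)
      have hWFq : 0 < ∫ x in Ioi (quantile F (1 - auxT h q)), h (1 - F x) := by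
        obtain ⟨_, hQ0, _⟩ := aux_quantile_spec hmonoF hzeroF htendF hcontF hφq0 hφq1
        exact aux_W_pos hmonoF hzeroF htendF hFstrict hFmean hconc h0 h1 hintF (le_of_lt hQ0)
      rw [div_le_div_iff₀ hWFp hWFq]
      exact aux_cross hmonoF hzeroF htendF hFstrict hcontF hFmean hmonoG hzeroG htendG
        hGstrict hcontG hGmean hmonoh hmaps h0 h1 hconc hdiff hintF hintG hcross
        hφp0 hφpq hφq1
    · -- `h ∘ (1 - G)` not integrable: both ratios vanish
      rw [aux_W_zero hmonoG hzeroG htendG hGstrict hcontG hmonoh hmaps h1 hintG hp.1,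
        aux_W_zero hmonoG hzeroG htendG hGstrict hcontG hmonoh hmaps h1 hintG hq.1]
      simp
  · -- `h ∘ (1 - F)` not integrable: both ratios vanish
    rw [aux_W_zero hmonoF hzeroF htendF hFstrict hcontF hmonoh hmaps h1 hintF hp.1,
      aux_W_zero hmonoF hzeroF htendF hFstrict hcontF hmonoh hmaps h1 hintF hq.1]
    simp
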